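/- Let ω > 0, let k be a positive integer, set τ_k = kπ/ω, and define Δ_ω : ℂ → ℂ by Δ_ω(s) = s² + (2/τ_k)((−1)^k e^{−sτ_k} − 1)s + ω². Then iω and −iω are roots of multiplicity exactly 2 of Δ_ω (Δ_ω and Δ_ω' vanish at ±iω while Δ_ω'' does not), and they form a pair of strictly dominant roots: every s ∈ ℂ with s ∉ {iω, −iω} and Δ_ω(s) = 0 satisfies Re s < 0. -/

import Mathlib

open Complex

private lemma mono_from_deriv (f f' : ℝ → ℝ) (hd : ∀ t, HasDerivAt f (f' t) t)
    (hf' : ∀ t, 0 ≤ t → 0 ≤ f' t) : ∀ x, 0 ≤ x → f 0 ≤ f x := by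
  intro x hx
  have hdiff : Differentiable ℝ f := fun t => (hd t).differentiableAt
  have hmono : MonotoneOn f (Set.Ici (0:ℝ)) := by
    apply monotoneOn_of_deriv_nonneg (convex_Ici 0) hdiff.continuous.continuousOn
      hdiff.differentiableOn
    intro t ht
    rw [interior_Ici] at ht
    rw [(hd t).deriv]
    exact hf' t ht.le
  exact hmono (by simp) (by simpa using hx) hx

private lemma aux1 (ν : ℝ) (hν : 0 ≤ ν) :
    2*ν*Real.exp (-ν) ≤ 1 - Real.exp (-ν)^2 := by
  have h := Real.self_le_sinh_iff.mpr hν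
  rw [Real.sinh_eq] at h
  have hprod : Real.exp ν * Real.exp (-ν) = 1 := by
    rw [← Real.exp_add]; simp
  have hpos := Real.exp_pos (-ν)
  nlinarith [mul_le_mul_of_nonneg_right h hpos.le]

private lemma aux2 (ν : ℝ) (hν : 0 ≤ ν) :
    2*ν*(1-Real.exp (-ν))^2 ≤ ν^2*(1 - Real.exp (-ν)^2) := by
  -- first: q(ν) = ν - 2 + (ν+2) e^{-ν} ≥ 0
  have hq : 0 ≤ ν - 2 + (ν+2)*Real.exp (-ν) := by
    have := mono_from_deriv (fun t => t - 2 + (t+2)*Real.exp (-t))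
      (fun t => 1 - (t+1)*Real.exp (-t))
      (fun t => by
        have h1 : HasDerivAt (fun t : ℝ => Real.exp (-t)) (Real.exp (-t) * (-1)) t :=
          ((hasDerivAt_id t).neg).exp
        have h2 : HasDerivAt (fun t : ℝ => (t+2)*Real.exp (-t))
            (1*Real.exp (-t) + (t+2)*(Real.exp (-t)*(-1))) t :=
          ((hasDerivAt_id t).add_const 2).mul h1
        have h3 := (((hasDerivAt_id t).sub_const 2).add h2)
        refine h3.congr_deriv ?_
        ring)
      (fun t ht => by
        have h1 : (t+1)*Real.exp (-t) ≤ 1 := by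
          have h2 : t + 1 ≤ Real.exp t := by
            have := Real.add_one_le_exp t; linarith
          have h3 := mul_le_mul_of_nonneg_right h2 (Real.exp_pos (-t)).le
          rwa [← Real.exp_add, add_neg_cancel, Real.exp_zero] at h3
        linarith) ν hν
    simpa using this
  have he1 : Real.exp (-ν) ≤ 1 := Real.exp_le_one_iff.mpr (by linarith)
  nlinarith [mul_nonneg (mul_nonneg hν (sub_nonneg.mpr he1)) hq]

private lemma key_lemma (ν θ c d : ℝ) (hν : 0 ≤ ν)
    (hc : c = Real.exp (-ν) * Real.cos θ)
    (hcd : c^2 + d^2 = Real.exp (-ν)^2)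
    (hM : 0 < (1-c)^2 + d^2) (hD : 0 < ν^2 + θ^2) :
    1/2 + ν/(ν^2+θ^2) ≤ (1-c)/((1-c)^2 + d^2) := by
  have he0 : 0 < Real.exp (-ν) := Real.exp_pos _
  set e := Real.exp (-ν) with hedef
  have hcos : 1 - θ^2/2 ≤ Real.cos θ := Real.one_sub_sq_div_two_le_cos
  have hc' : e*(1 - θ^2/2) ≤ c := by
    rw [hc]; exact mul_le_mul_of_nonneg_left hcos he0.le
  have hi := aux1 ν hν
  have hii := aux2 ν hν
  rw [← hedef] at hi hii
  have hmain : 2*ν*(1-2*c+e^2) ≤ (1-e^2)*(ν^2+θ^2) := by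
    nlinarith [mul_le_mul_of_nonneg_left hc' (by linarith : (0:ℝ) ≤ 4*ν),
      mul_le_mul_of_nonneg_right hi (sq_nonneg θ)]
  have hMeq : (1-c)^2 + d^2 = 1 - 2*c + e^2 := by linear_combination hcd
  rw [hMeq] at hM ⊢
  have h1 : 1/2 + ν/(ν^2+θ^2) = (ν^2+θ^2+2*ν)/(2*(ν^2+θ^2)) := by
    field_simp
  rw [h1, div_le_div_iff₀ (by linarith) hM]
  nlinarith [hmain]


private lemma endgame (ν m br R : ℝ) (hbr : 3 < br)
    (hD1 : 0 < ν^2+(m-br)^2) (hD2 : 0 < ν^2+(m+br)^2)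
    (hre : R = ν/(ν^2+(m-br)^2) + ν/(ν^2+(m+br)^2))
    (k1 : 1/2 + ν/(ν^2+(m-br)^2) ≤ R) (k2 : 1/2 + ν/(ν^2+(m+br)^2) ≤ R) : False := by
  have hA : 1/2 ≤ ν/(ν^2+(m+br)^2) := by linarith
  have hB : 1/2 ≤ ν/(ν^2+(m-br)^2) := by linarith
  rw [le_div_iff₀ hD2] at hA
  rw [le_div_iff₀ hD1] at hB
  have hθ2 : (m+br)^2 ≤ 1 := by nlinarith [sq_nonneg (ν-1)]
  have hθ1 : (m-br)^2 ≤ 1 := by nlinarith [sq_nonneg (ν-1)]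
  nlinarith [hθ1, hθ2, sq_nonneg m]

set_option maxHeartbeats 1000000 in
theorem delayed_resonator_dominant_double_roots
    (ω : ℝ) (hω : 0 < ω) (k : ℕ) (hk : 1 ≤ k)
    (τ : ℝ) (hτ : τ = k * Real.pi / ω)
    (Δω : ℂ → ℂ)
    (hΔω : ∀ s : ℂ, Δω s =
      s ^ 2 + (2 / (τ : ℂ)) * ((-1 : ℂ) ^ k * Complex.exp (-s * τ) - 1) * s + (ω : ℂ) ^ 2) :
    (Δω (Complex.I * ω) = 0 ∧ deriv Δω (Complex.I * ω) = 0 ∧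
      iteratedDeriv 2 Δω (Complex.I * ω) ≠ 0) ∧
    (Δω (-(Complex.I * ω)) = 0 ∧ deriv Δω (-(Complex.I * ω)) = 0 ∧
      iteratedDeriv 2 Δω (-(Complex.I * ω)) ≠ 0) ∧
    (∀ s : ℂ, s ≠ Complex.I * ω → s ≠ -(Complex.I * ω) → Δω s = 0 → s.re < 0) := by
  have hωne : (ω:ℝ) ≠ 0 := ne_of_gt hω
  have hk0 : 0 < (k:ℝ) := by exact_mod_cast Nat.lt_of_lt_of_le Nat.zero_lt_one hk
  have hτpos : 0 < τ := by rw [hτ]; positivity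
  have hτc0 : (τ:ℂ) ≠ 0 := by exact_mod_cast ne_of_gt hτpos
  have hτω : τ * ω = k * Real.pi := by rw [hτ]; field_simp
  set br : ℝ := τ * ω with hbrdef
  have hbrpi : br = k * Real.pi := hτω
  have hbrc : ((br:ℝ):ℂ) = (τ:ℂ) * (ω:ℂ) := by rw [hbrdef]; push_cast; ring
  -- exponential values
  have hexpbr : Complex.exp ((br:ℂ) * Complex.I) = (-1:ℂ)^k := by
    rw [show ((br:ℝ):ℂ) = (k:ℂ) * (Real.pi:ℂ) by rw [hbrpi]; push_cast; ring]
    rw [mul_assoc, Complex.exp_nat_mul, Complex.exp_pi_mul_I]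
  have hexpnegbr : Complex.exp (-((br:ℂ) * Complex.I)) = (-1:ℂ)^k := by
    rw [Complex.exp_neg, hexpbr, ← inv_pow]
    norm_num
  have hxx : (-1:ℂ)^k * (-1:ℂ)^k = 1 := by
    rw [← mul_pow]; norm_num
  have hττ : (τ:ℂ) * (τ:ℂ)⁻¹ = 1 := mul_inv_cancel₀ hτc0
  -- the function and its derivatives
  set g : ℂ → ℂ := fun s => s^2 + (2/(τ:ℂ)) * (((-1:ℂ)^k * Complex.exp (-s*(τ:ℂ)) - 1)*s)
      + (ω:ℂ)^2 with hgdef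
  have hfun : Δω = g := by
    funext s; rw [hΔω s, hgdef]; ring
  set g1 : ℂ → ℂ := fun s => 2*s + (2/(τ:ℂ)) *
      (((-1:ℂ)^k * (Complex.exp (-s*(τ:ℂ)) * (-1*(τ:ℂ))))*s
        + ((-1:ℂ)^k * Complex.exp (-s*(τ:ℂ)) - 1)) with hg1def
  have hexps : ∀ s : ℂ, HasDerivAt (fun s : ℂ => Complex.exp (-s*(τ:ℂ)))
      (Complex.exp (-s*(τ:ℂ)) * (-1*(τ:ℂ))) s := by
    intro s
    exact (((hasDerivAt_id s).neg).mul_const (τ:ℂ)).cexp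
  have hg1 : ∀ s, HasDerivAt g (g1 s) s := by
    intro s
    have h2 : HasDerivAt (fun s : ℂ => (-1:ℂ)^k * Complex.exp (-s*(τ:ℂ)) - 1)
        ((-1:ℂ)^k * (Complex.exp (-s*(τ:ℂ)) * (-1*(τ:ℂ)))) s :=
      ((hexps s).const_mul _).sub_const 1
    have h3 := h2.mul (hasDerivAt_id s)
    have h4 := ((hasDerivAt_pow 2 s).add ((h3.const_mul ((2:ℂ)/(τ:ℂ))))).add_const ((ω:ℂ)^2)
    simp only [id_eq] at h4
    refine h4.congr_deriv ?_
    push_cast; ring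
  have hd1fun : deriv Δω = g1 := by
    funext t; rw [hfun]; exact (hg1 t).deriv
  set g2 : ℂ → ℂ := fun s => 2 + (2/(τ:ℂ)) *
      ( (((-1:ℂ)^k * ((Complex.exp (-s*(τ:ℂ)) * (-1*(τ:ℂ))) * (-1*(τ:ℂ)))))*s
        + ((-1:ℂ)^k * (Complex.exp (-s*(τ:ℂ)) * (-1*(τ:ℂ))))
        + ((-1:ℂ)^k * (Complex.exp (-s*(τ:ℂ)) * (-1*(τ:ℂ)))) ) with hg2def
  have hg2 : ∀ s, HasDerivAt g1 (g2 s) s := by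
    intro s
    have hA : HasDerivAt (fun s : ℂ => ((-1:ℂ)^k * (Complex.exp (-s*(τ:ℂ)) * (-1*(τ:ℂ))))*s)
        ((((-1:ℂ)^k * ((Complex.exp (-s*(τ:ℂ)) * (-1*(τ:ℂ))) * (-1*(τ:ℂ)))))*s
          + ((-1:ℂ)^k * (Complex.exp (-s*(τ:ℂ)) * (-1*(τ:ℂ))))) s := by
      have h1 := (((hexps s).mul_const (-1*(τ:ℂ))).const_mul ((-1:ℂ)^k)).mul (hasDerivAt_id s)
      simp only [id_eq] at h1
      refine h1.congr_deriv ?_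
      ring
    have hB : HasDerivAt (fun s : ℂ => (-1:ℂ)^k * Complex.exp (-s*(τ:ℂ)) - 1)
        ((-1:ℂ)^k * (Complex.exp (-s*(τ:ℂ)) * (-1*(τ:ℂ)))) s :=
      ((hexps s).const_mul _).sub_const 1
    have h4 := (((hasDerivAt_id s).const_mul (2:ℂ)).add ((hA.add hB).const_mul ((2:ℂ)/(τ:ℂ))))
    refine h4.congr_deriv ?_
    ring
  have hd2fun : iteratedDeriv 2 Δω = fun t => g2 t := by
    rw [show (2:ℕ) = 1+1 from rfl, iteratedDeriv_succ, iteratedDeriv_one, hd1fun]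
    funext t; exact (hg2 t).deriv
  -- generic multiplicity claim
  have main : ∀ s₀ : ℂ, s₀^2 = -((ω:ℂ))^2 → Complex.exp (-s₀*(τ:ℂ)) = (-1:ℂ)^k →
      (s₀*(τ:ℂ)).re = 0 →
      (Δω s₀ = 0 ∧ deriv Δω s₀ = 0 ∧ iteratedDeriv 2 Δω s₀ ≠ 0) := by
    intro s₀ h2 hexp hre0
    refine ⟨?_, ?_, ?_⟩
    · rw [hfun, hgdef]
      simp only []
      rw [hexp]
      linear_combination h2 + (2/(τ:ℂ)*s₀)*hxx
    · rw [hd1fun, hg1def]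
      simp only []
      rw [hexp]
      linear_combination (2*((τ:ℂ))⁻¹ - 2*((τ:ℂ))⁻¹*(τ:ℂ)*s₀)*hxx - 2*s₀*hττ
    · rw [hd2fun]
      simp only []
      rw [hg2def]
      simp only []
      rw [hexp]
      have hval : 2 + (2/(τ:ℂ)) *
          ( (((-1:ℂ)^k * (((-1:ℂ)^k * (-1*(τ:ℂ))) * (-1*(τ:ℂ)))))*s₀
            + ((-1:ℂ)^k * ((-1:ℂ)^k * (-1*(τ:ℂ))))
            + ((-1:ℂ)^k * ((-1:ℂ)^k * (-1*(τ:ℂ)))) ) = 2*(τ:ℂ)*s₀ - 2 := by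
        linear_combination (2*((τ:ℂ))⁻¹*(τ:ℂ)^2*s₀ - 4*((τ:ℂ))⁻¹*(τ:ℂ))*hxx
          + (2*s₀*(τ:ℂ) - 4)*hττ
      rw [hval]
      intro hcontra
      have hre := congrArg Complex.re hcontra
      have hmul : ((τ:ℂ)*s₀).re = 0 := by rw [mul_comm]; exact hre0
      simp only [Complex.sub_re, Complex.mul_re, Complex.ofReal_re, Complex.ofReal_im,
        Complex.zero_re] at hre hmul
      norm_num at hre
      nlinarith [hre, hmul]
  refine ⟨?_, ?_, ?_⟩
  · apply main
    · rw [mul_pow, Complex.I_sq]; ring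
    · rw [show -(Complex.I*(ω:ℂ))*(τ:ℂ) = -((br:ℂ)*Complex.I) by rw [hbrc]; ring]
      exact hexpnegbr
    · simp [Complex.mul_re, Complex.mul_im]
  · apply main
    · rw [neg_pow, mul_pow, Complex.I_sq]; ring
    · rw [show -(-(Complex.I*(ω:ℂ)))*(τ:ℂ) = (br:ℂ)*Complex.I by rw [hbrc]; ring]
      exact hexpbr
    · simp [Complex.mul_re, Complex.mul_im]
  · intro s hs1 hs2 hs0
    by_contra hcon
    push_neg at hcon
    rw [hΔω s] at hs0
    set E : ℂ := (-1:ℂ)^k * Complex.exp (-s*(τ:ℂ)) with hEdef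
    set p₁ : ℂ := s*(τ:ℂ) - (br:ℂ)*Complex.I with hp1def
    set p₂ : ℂ := s*(τ:ℂ) + (br:ℂ)*Complex.I with hp2def
    have hp1f : p₁ = (s - Complex.I*(ω:ℂ))*(τ:ℂ) := by rw [hp1def, hbrc]; ring
    have hp2f : p₂ = (s - (-(Complex.I*(ω:ℂ))))*(τ:ℂ) := by rw [hp2def, hbrc]; ring
    have hp1 : p₁ ≠ 0 := hp1f ▸ mul_ne_zero (sub_ne_zero.mpr hs1) hτc0
    have hp2 : p₂ ≠ 0 := hp2f ▸ mul_ne_zero (sub_ne_zero.mpr hs2) hτc0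
    have hΦ : p₁ * p₂ = (p₁ + p₂)*(1 - E) := by
      rw [hp1def, hp2def]
      linear_combination (τ:ℂ)^2 * hs0 - ((br:ℝ):ℂ)^2 * Complex.I_sq
        + (((br:ℝ):ℂ) + (τ:ℂ)*(ω:ℂ)) * hbrc + 2*s*(τ:ℂ)*(1-E) * hττ
    have h1E : (1:ℂ) - E ≠ 0 := by
      intro h
      rw [h, mul_zero] at hΦ
      exact (mul_ne_zero hp1 hp2) hΦ
    have h12 : p₁ + p₂ ≠ 0 := by
      intro h
      rw [h, zero_mul] at hΦ
      exact (mul_ne_zero hp1 hp2) hΦ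
    have hsum : ((1:ℂ) - E)⁻¹ = p₁⁻¹ + p₂⁻¹ := by
      rw [inv_add_inv hp1 hp2, hΦ, div_mul_cancel_left₀ h12]
    have hEp1 : E = Complex.exp (-p₁) := by
      rw [hEdef, hp1def,
        show -(s*(τ:ℂ) - (br:ℂ)*Complex.I) = (br:ℂ)*Complex.I + -(s*(τ:ℂ)) by ring,
        Complex.exp_add, hexpbr]
      simp only [neg_mul]
    have hEp2 : E = Complex.exp (-p₂) := by
      rw [hEdef, hp2def,
        show -(s*(τ:ℂ) + (br:ℂ)*Complex.I) = -((br:ℂ)*Complex.I) + -(s*(τ:ℂ)) by ring,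
        Complex.exp_add, hexpnegbr]
      simp only [neg_mul]
    set ν : ℝ := s.re * τ with hνdef
    set m : ℝ := s.im * τ with hmdef
    have hν0 : 0 ≤ ν := mul_nonneg hcon hτpos.le
    have hp1re : p₁.re = ν := by
      rw [hp1def]
      simp [Complex.sub_re, Complex.mul_re, hνdef]
    have hp2re : p₂.re = ν := by
      rw [hp2def]
      simp [Complex.add_re, Complex.mul_re, hνdef]
    have hp1im : p₁.im = m - br := by
      rw [hp1def]
      simp [Complex.sub_im, Complex.mul_im, hmdef]
    have hp2im : p₂.im = m + br := by
      rw [hp2def]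
      simp [Complex.add_im, Complex.mul_im, hmdef]
    have habs : ‖E‖ = Real.exp (-ν) := by
      rw [hEp1, Complex.norm_exp, Complex.neg_re, hp1re]
    have hcd : E.re^2 + E.im^2 = Real.exp (-ν)^2 := by
      rw [← habs, Complex.sq_norm, Complex.normSq_apply]; ring
    have hMeq : Complex.normSq (1 - E) = (1-E.re)^2 + E.im^2 := by
      rw [Complex.normSq_apply]
      simp only [Complex.sub_re, Complex.sub_im, Complex.one_re, Complex.one_im]
      ring
    have hMpos : 0 < (1-E.re)^2 + E.im^2 := hMeq ▸ Complex.normSq_pos.mpr h1E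
    have hc1 : E.re = Real.exp (-ν) * Real.cos (m - br) := by
      rw [hEp1, Complex.exp_re, Complex.neg_re, Complex.neg_im, hp1re, hp1im, Real.cos_neg]
    have hc2 : E.re = Real.exp (-ν) * Real.cos (m + br) := by
      rw [hEp2, Complex.exp_re, Complex.neg_re, Complex.neg_im, hp2re, hp2im, Real.cos_neg]
    have hD1eq : Complex.normSq p₁ = ν^2 + (m-br)^2 := by
      rw [Complex.normSq_apply, hp1re, hp1im]; ring
    have hD2eq : Complex.normSq p₂ = ν^2 + (m+br)^2 := by
      rw [Complex.normSq_apply, hp2re, hp2im]; ring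
    have hD1pos : 0 < ν^2 + (m-br)^2 := hD1eq ▸ Complex.normSq_pos.mpr hp1
    have hD2pos : 0 < ν^2 + (m+br)^2 := hD2eq ▸ Complex.normSq_pos.mpr hp2
    have key1 := key_lemma ν (m-br) E.re E.im hν0 hc1 hcd hMpos hD1pos
    have key2 := key_lemma ν (m+br) E.re E.im hν0 hc2 hcd hMpos hD2pos
    have hre := congrArg Complex.re hsum
    rw [Complex.add_re, Complex.inv_re, Complex.inv_re, Complex.inv_re] at hre
    rw [hD1eq, hD2eq, hp1re, hp2re, hMeq] at hre
    have h1Ere : ((1:ℂ)-E).re = 1 - E.re := by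
      simp [Complex.sub_re]
    rw [h1Ere] at hre
    have hk1 : (1:ℝ) ≤ (k:ℝ) := by exact_mod_cast hk
    have hbrge : 3 < br := by
      rw [hbrpi]
      nlinarith [Real.pi_gt_three]
    exact endgame ν m br ((1-E.re)/((1-E.re)^2+E.im^2)) hbrge hD1pos hD2pos hre key1 key2
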